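/- For K ≥ m ≥ 1 and i.i.d. positive integrable random variables w_1, ..., w_K, one has E[log((1/K)∑_{k=1}^K w_k)] ≥ E[log((1/m)∑_{j=1}^m w_j)]. -/

import Mathlib

open MeasureTheory ProbabilityTheory Filter Set
open scoped ENNReal BigOperators Topology

/-- Count of `m`-subsets of `range K` containing a fixed element. -/
lemma iwae_card_filter_mem (K m : ℕ) (hm : 1 ≤ m) {i : ℕ} (hi : i ∈ Finset.range K) :
    ((((Finset.range K).powersetCard m).filter fun I => i ∈ I).card)
      = (K - 1).choose (m - 1) := by
  classical
  have h1 : ((((Finset.range K).powersetCard m).filter fun I => i ∈ I).card)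
      = (((Finset.range K).erase i).powersetCard (m - 1)).card := by
    refine Finset.card_bij' (fun I _ => I.erase i) (fun J _ => insert i J) ?_ ?_ ?_ ?_
    · intro I hI
      obtain ⟨hIP, hiI⟩ := Finset.mem_filter.mp hI
      obtain ⟨hsub, hcard⟩ := Finset.mem_powersetCard.mp hIP
      refine Finset.mem_powersetCard.mpr ⟨fun x hx => ?_, ?_⟩
      · obtain ⟨hxne, hxI⟩ := Finset.mem_erase.mp hx
        exact Finset.mem_erase.mpr ⟨hxne, hsub hxI⟩
      · rw [Finset.card_erase_of_mem hiI, hcard]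
    · intro J hJ
      obtain ⟨hsub, hcard⟩ := Finset.mem_powersetCard.mp hJ
      have hiJ : i ∉ J := fun h => (Finset.mem_erase.mp (hsub h)).1 rfl
      refine Finset.mem_filter.mpr ⟨Finset.mem_powersetCard.mpr ⟨?_, ?_⟩,
        Finset.mem_insert_self _ _⟩
      · intro x hx
        rcases Finset.mem_insert.mp hx with h | h
        · exact h ▸ hi
        · exact Finset.mem_of_mem_erase (hsub h)
      · rw [Finset.card_insert_of_notMem hiJ, hcard]
        omega
    · intro I hI
      exact Finset.insert_erase (Finset.mem_filter.mp hI).2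
    · intro J hJ
      obtain ⟨hsub, _⟩ := Finset.mem_powersetCard.mp hJ
      exact Finset.erase_insert (fun h => (Finset.mem_erase.mp (hsub h)).1 rfl)
  rw [h1, Finset.card_powersetCard, Finset.card_erase_of_mem hi, Finset.card_range]

/-- Combinatorial double counting. -/
lemma iwae_sum_powersetCard (K m : ℕ) (hm : 1 ≤ m) (f : ℕ → ℝ) :
    ∑ I ∈ (Finset.range K).powersetCard m, ∑ i ∈ I, f i
      = ((K - 1).choose (m - 1) : ℝ) * ∑ i ∈ Finset.range K, f i := by
  classical
  calc ∑ I ∈ (Finset.range K).powersetCard m, ∑ i ∈ I, f i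
      = ∑ I ∈ (Finset.range K).powersetCard m, ∑ i ∈ Finset.range K,
          if i ∈ I then f i else 0 := by
        refine Finset.sum_congr rfl fun I hI => ?_
        rw [Finset.sum_ite_mem, Finset.inter_eq_right.mpr
          (Finset.mem_powersetCard.mp hI).1]
    _ = ∑ i ∈ Finset.range K, ∑ I ∈ (Finset.range K).powersetCard m,
          if i ∈ I then f i else 0 := Finset.sum_comm
    _ = ∑ i ∈ Finset.range K, ((K - 1).choose (m - 1) : ℝ) * f i := by
        refine Finset.sum_congr rfl fun i hi => ?_
        rw [← Finset.sum_filter, Finset.sum_const, iwae_card_filter_mem K m hm hi,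
          nsmul_eq_mul]
    _ = _ := by rw [← Finset.mul_sum]
lemma iwae_map_sum_card_eq
    {Ω : Type*} [MeasurableSpace Ω] (P : Measure Ω) [IsProbabilityMeasure P]
    (w : ℕ → Ω → ℝ) (hmeas : ∀ i, Measurable (w i))
    (hindep : iIndepFun w P)
    (hident : ∀ i, Measure.map (w i) P = Measure.map (w 0) P) :
    ∀ (n : ℕ) (I J : Finset ℕ), I.card = n → J.card = n →
      Measure.map (fun ω => ∑ i ∈ I, w i ω) P
        = Measure.map (fun ω => ∑ i ∈ J, w i ω) P := by
  have hSmeas : ∀ s : Finset ℕ, Measurable (fun ω => ∑ i ∈ s, w i ω) :=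
    fun s => Finset.measurable_sum s fun i _ => hmeas i
  have key : ∀ (a : ℕ) (s : Finset ℕ), a ∉ s →
      Measure.map (fun ω => w a ω + ∑ i ∈ s, w i ω) P
        = Measure.map (fun p : ℝ × ℝ => p.1 + p.2)
            ((P.map (w 0)).prod (P.map (fun ω => ∑ i ∈ s, w i ω))) := by
    intro a s has
    have hindep' : IndepFun (w a) (fun ω => ∑ i ∈ s, w i ω) P := by
      have := (hindep.indepFun_finsetSum_of_notMem hmeas has).symm
      have he : (fun ω => ∑ i ∈ s, w i ω) = (∑ j ∈ s, w j) := by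
        ext ω; rw [Finset.sum_apply]
      rwa [he]
    have hmap : P.map (fun ω => (w a ω, ∑ i ∈ s, w i ω))
        = (P.map (w a)).prod (P.map (fun ω => ∑ i ∈ s, w i ω)) :=
      (indepFun_iff_map_prod_eq_prod_map_map (hmeas a).aemeasurable
        (hSmeas s).aemeasurable).mp hindep'
    calc Measure.map (fun ω => w a ω + ∑ i ∈ s, w i ω) P
        = Measure.map (fun p : ℝ × ℝ => p.1 + p.2)
            (P.map (fun ω => (w a ω, ∑ i ∈ s, w i ω))) := by
          rw [Measure.map_map measurable_add ((hmeas a).prodMk (hSmeas s))]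
          rfl
      _ = _ := by rw [hmap, hident a]
  intro n
  induction n with
  | zero =>
      intro I J hI hJ
      rw [Finset.card_eq_zero] at hI hJ
      subst hI; subst hJ
      simp
  | succ n ih =>
      intro I J hI hJ
      obtain ⟨a, ha⟩ := Finset.card_pos.mp (by rw [hI]; exact n.succ_pos)
      obtain ⟨b, hb⟩ := Finset.card_pos.mp (by rw [hJ]; exact n.succ_pos)
      have hIa : (fun ω => ∑ i ∈ I, w i ω)
          = (fun ω => w a ω + ∑ i ∈ I.erase a, w i ω) := by
        ext ω; exact (Finset.add_sum_erase I (fun i => w i ω) ha).symm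
      have hJb : (fun ω => ∑ i ∈ J, w i ω)
          = (fun ω => w b ω + ∑ i ∈ J.erase b, w i ω) := by
        ext ω; exact (Finset.add_sum_erase J (fun i => w i ω) hb).symm
      have hcardI : (I.erase a).card = n := by
        rw [Finset.card_erase_of_mem ha, hI]; omega
      have hcardJ : (J.erase b).card = n := by
        rw [Finset.card_erase_of_mem hb, hJ]; omega
      rw [hIa, hJb, key a _ (Finset.notMem_erase a I),
        key b _ (Finset.notMem_erase b J), ih _ _ hcardI hcardJ]

/-- For `K ≥ m ≥ 1` and i.i.d. positive integrable random variables `w 0, ..., w (K-1)`,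
one has `E[log((1/K) ∑_{k<K} w k)] ≥ E[log((1/m) ∑_{j<m} w j)]`. -/
theorem iwae_bound_mono_of_le
    {Ω : Type*} [MeasurableSpace Ω] (P : Measure Ω) [IsProbabilityMeasure P]
    (w : ℕ → Ω → ℝ)
    (hmeas : ∀ i, Measurable (w i))
    (hindep : iIndepFun w P)
    (hident : ∀ i, Measure.map (w i) P = Measure.map (w 0) P)
    (hpos : ∀ i, ∀ᵐ ω ∂P, 0 < w i ω)
    (hint : ∀ i, Integrable (w i) P)
    (hlogint : ∀ K : ℕ, 1 ≤ K →
      Integrable (fun ω => Real.log ((∑ k ∈ Finset.range K, w k ω) / K)) P)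
    (m K : ℕ) (hm : 1 ≤ m) (hmK : m ≤ K) :
    ∫ ω, Real.log ((∑ j ∈ Finset.range m, w j ω) / m) ∂P ≤
      ∫ ω, Real.log ((∑ k ∈ Finset.range K, w k ω) / K) ∂P := by
  classical
  have hK : 1 ≤ K := le_trans hm hmK
  set P' := (Finset.range K).powersetCard m with hP'
  set N := K.choose m with hNdef
  set C := (K - 1).choose (m - 1) with hCdef
  have hN0 : 0 < N := Nat.choose_pos hmK
  have hC0 : 0 < C := Nat.choose_pos (by omega)
  have hNr : (0:ℝ) < N := by exact_mod_cast hN0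
  have hCr : (0:ℝ) < C := by exact_mod_cast hC0
  have hKr : (0:ℝ) < K := by exact_mod_cast hK
  have hmr : (0:ℝ) < m := by exact_mod_cast hm
  have hNC : K * C = N * m := by
    have h := Nat.add_one_mul_choose_eq (K - 1) (m - 1)
    have e1 : K - 1 + 1 = K := by omega
    have e2 : m - 1 + 1 = m := by omega
    simp only [Nat.succ_eq_add_one, e1, e2] at h
    rw [hNdef, hCdef]
    omega
  have hNCr : (K:ℝ) * C = (N:ℝ) * m := by exact_mod_cast hNC
  have hcardP' : P'.card = N := by
    rw [hP', Finset.card_powersetCard, Finset.card_range]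
  have hSmeas : ∀ s : Finset ℕ, Measurable (fun ω => ∑ i ∈ s, w i ω) :=
    fun s => Finset.measurable_sum s fun i _ => hmeas i
  have hg : Measurable (fun t : ℝ => Real.log (t / (m:ℝ))) :=
    Real.measurable_log.comp (measurable_id.div_const _)
  have hlaw : ∀ I ∈ P', Measure.map (fun ω => ∑ i ∈ I, w i ω) P
      = Measure.map (fun ω => ∑ i ∈ Finset.range m, w i ω) P := fun I hI =>
    iwae_map_sum_card_eq P w hmeas hindep hident m I (Finset.range m)
      (Finset.mem_powersetCard.mp hI).2 (Finset.card_range m)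
  have hint_m : Integrable (fun ω => Real.log ((∑ i ∈ Finset.range m, w i ω) / m)) P :=
    hlogint m hm
  have hint_I : ∀ I ∈ P',
      Integrable (fun ω => Real.log ((∑ i ∈ I, w i ω) / m)) P := by
    intro I hI
    have h1 : Integrable (fun t : ℝ => Real.log (t / (m:ℝ)))
        (P.map (fun ω => ∑ i ∈ Finset.range m, w i ω)) :=
      (integrable_map_measure hg.aestronglyMeasurable (hSmeas _).aemeasurable).mpr hint_m
    rw [← hlaw I hI] at h1
    exact (integrable_map_measure hg.aestronglyMeasurable (hSmeas _).aemeasurable).mp h1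
  have hintegral_I : ∀ I ∈ P',
      ∫ ω, Real.log ((∑ i ∈ I, w i ω) / m) ∂P
        = ∫ ω, Real.log ((∑ i ∈ Finset.range m, w i ω) / m) ∂P := by
    intro I hI
    rw [← integral_map (hSmeas I).aemeasurable hg.aestronglyMeasurable, hlaw I hI,
      integral_map (hSmeas _).aemeasurable hg.aestronglyMeasurable]
  have hae : ∀ᵐ ω ∂P, ∀ i, 0 < w i ω := ae_all_iff.mpr hpos
  have hptwise : ∀ᵐ ω ∂P,
      (∑ I ∈ P', (N:ℝ)⁻¹ * Real.log ((∑ i ∈ I, w i ω) / m))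
        ≤ Real.log ((∑ k ∈ Finset.range K, w k ω) / K) := by
    filter_upwards [hae] with ω hω
    have hmem : ∀ I ∈ P', (∑ i ∈ I, w i ω) / (m:ℝ) ∈ Ioi (0:ℝ) := by
      intro I hI
      obtain ⟨hsub, hcard⟩ := Finset.mem_powersetCard.mp hI
      have hne : I.Nonempty := Finset.card_pos.mp (by rw [hcard]; exact hm)
      exact div_pos (Finset.sum_pos (fun i _ => hω i) hne) hmr
    have hwsum : ∑ _I ∈ P', (N:ℝ)⁻¹ = 1 := by
      rw [Finset.sum_const, hcardP', nsmul_eq_mul, mul_inv_cancel₀ hNr.ne']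
    have hjensen := strictConcaveOn_log_Ioi.concaveOn.le_map_sum
      (t := P') (w := fun _ => (N:ℝ)⁻¹)
      (p := fun I => (∑ i ∈ I, w i ω) / (m:ℝ))
      (fun I _ => by positivity) hwsum hmem
    simp only [smul_eq_mul] at hjensen
    have heq : ∑ I ∈ P', (N:ℝ)⁻¹ * ((∑ i ∈ I, w i ω) / m)
        = (∑ k ∈ Finset.range K, w k ω) / K := by
      rw [← Finset.mul_sum, ← Finset.sum_div,
        iwae_sum_powersetCard K m hm (fun i => w i ω), ← hCdef]
      field_simp
      linear_combination (∑ i ∈ Finset.range K, w i ω) * hNCr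
    rw [heq] at hjensen
    exact hjensen
  have hF_int : Integrable
      (fun ω => ∑ I ∈ P', (N:ℝ)⁻¹ * Real.log ((∑ i ∈ I, w i ω) / m)) P :=
    integrable_finset_sum _ (fun I hI => (hint_I I hI).const_mul _)
  have hmain := integral_mono_ae hF_int (hlogint K hK) hptwise
  have hFeq : ∫ ω, (∑ I ∈ P', (N:ℝ)⁻¹ * Real.log ((∑ i ∈ I, w i ω) / m)) ∂P
      = ∫ ω, Real.log ((∑ i ∈ Finset.range m, w i ω) / m) ∂P := by
    rw [integral_finset_sum _ (fun I hI => (hint_I I hI).const_mul _)]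
    have : ∀ I ∈ P', (∫ ω, (N:ℝ)⁻¹ * Real.log ((∑ i ∈ I, w i ω) / m) ∂P)
        = (N:ℝ)⁻¹ * ∫ ω, Real.log ((∑ i ∈ Finset.range m, w i ω) / m) ∂P := by
      intro I hI
      rw [integral_const_mul, hintegral_I I hI]
    rw [Finset.sum_congr rfl this, Finset.sum_const, hcardP', nsmul_eq_mul,
      ← mul_assoc, mul_inv_cancel₀ hNr.ne', one_mul]
  linarith [hmain, hFeq.symm.le]
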